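/- Let p be an odd prime and M, A, R be unitaries with M^p = A^p = R^p = I, MA = ω^φ AM (φ ≠ 0), MR = ω^α RM, and AR = ω^β RA. If V = (ω^a/√p) Σ_{k=0}^{p−1} ω^{−k(σ−a)} M^k A^{−k−1}, then V R V† = ω^{φ^{−1}(α−β)(a−σ) − β} · R · A^{−φ^{−1}(α−β)} · M^{φ^{−1}(α−β)}, where φ^{−1} is the inverse of φ in F_p. In particular, V maps products of M, A, R (Pauli operators) to such products up to a pth root of unity phase. -/

import Mathlib

open Matrix

/-- The `p`-th root of unity `ω = e^{2πi/p}`. -/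
noncomputable def omega (p : ℕ) : ℂ := Complex.exp (2 * Real.pi * Complex.I / p)

/-- The operator `V = (ω^a/√p) Σ_{k=0}^{p−1} ω^{−k(σ−a)} M^k A^{−k−1}`,
where `A⁻¹ = A† = star A` for a unitary `A`. -/
noncomputable def Vop (p d : ℕ) (M A : Matrix (Fin d) (Fin d) ℂ) (σ a : ZMod p) :
    Matrix (Fin d) (Fin d) ℂ :=
  (omega p ^ a.val / (Real.sqrt p : ℂ)) •
    ∑ k ∈ Finset.range p,
      omega p ^ ((-(k : ZMod p) * (σ - a)).val) • (M ^ k * (star A) ^ (k + 1))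

namespace Stmt7Aux

noncomputable def w (p : ℕ) (t : ZMod p) : ℂ := omega p ^ t.val

variable {p : ℕ} [Fact p.Prime]

lemma pp : p ≠ 0 := (Fact.out : p.Prime).ne_zero

omit [Fact p.Prime] in
lemma pow_mod_eq {M : Type*} [Monoid M] {x : M} (hx : x ^ p = 1) (n : ℕ) :
    x ^ n = x ^ (n % p) := by
  conv_lhs => rw [← Nat.div_add_mod n p]
  rw [pow_add, pow_mul, hx, one_pow, one_mul]

lemma val_cast (s : ZMod p) : ((s.val : ℕ) : ZMod p) = s := by
  simp [ZMod.natCast_val, ZMod.cast_id]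

lemma omega_pow_p : omega p ^ p = 1 := (Complex.isPrimitiveRoot_exp p pp).pow_eq_one

lemma w_natCast (n : ℕ) : w p (n : ZMod p) = omega p ^ n := by
  rw [w, ZMod.val_natCast, ← pow_mod_eq omega_pow_p]

lemma w_add (s t : ZMod p) : w p (s + t) = w p s * w p t := by
  have h : s + t = ((s.val + t.val : ℕ) : ZMod p) := by push_cast [val_cast]; ring
  rw [h, w_natCast, pow_add]; rfl

lemma w_zero : w p 0 = 1 := by simp [w]

lemma w_pow (t : ZMod p) (n : ℕ) : w p t ^ n = w p (t * n) := by
  have h : t * n = ((t.val * n : ℕ) : ZMod p) := by push_cast [val_cast]; ring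
  rw [h, w_natCast, pow_mul]; rfl

omit [Fact p.Prime] in
lemma w_ne_zero (t : ZMod p) : w p t ≠ 0 := pow_ne_zero _ (Complex.exp_ne_zero _)

lemma w_mul_neg (t : ZMod p) : w p t * w p (-t) = 1 := by
  rw [← w_add]; simp [w_zero]

lemma w_conj (t : ZMod p) : starRingEnd ℂ (w p t) = w p (-t) := by
  have habs : ‖w p t‖ = 1 := by
    rw [w, norm_pow]
    have h1 : ‖omega p‖ = 1 := by
      rw [omega, Complex.norm_exp]
      have : (2 * (Real.pi:ℂ) * Complex.I / p).re = 0 := by simp [Complex.div_re]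
      rw [this, Real.exp_zero]
    simp [h1]
  rw [← Complex.inv_eq_conj habs]
  exact inv_eq_of_mul_eq_one_right (w_mul_neg t)

lemma sum_range_zmod {α : Type*} [AddCommMonoid α] (f : ZMod p → α) :
    ∑ k ∈ Finset.range p, f (k : ZMod p) = ∑ x : ZMod p, f x := by
  refine Finset.sum_nbij' (fun k => (k : ZMod p)) (fun x => x.val) ?_ ?_ ?_ ?_ ?_
  · intro a _; exact Finset.mem_univ _
  · intro x _; exact Finset.mem_range.2 (ZMod.val_lt x)
  · intro a ha; exact ZMod.val_natCast_of_lt (Finset.mem_range.1 ha)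
  · intro x _; exact val_cast x
  · intro a _; rfl

lemma sum_w (t : ZMod p) : ∑ x : ZMod p, w p (x * t) = if t = 0 then (p : ℂ) else 0 := by
  split_ifs with h
  · simp [h, w_zero, Finset.card_univ, ZMod.card]
  · have h1 : ∑ x : ZMod p, w p (x * t) = ∑ x : ZMod p, w p x :=
      Equiv.sum_comp (Equiv.mulRight₀ t h) (w p)
    rw [h1, ← sum_range_zmod (w p)]
    have h2 : ∀ k ∈ Finset.range p, w p (k : ZMod p) = omega p ^ k := fun k _ => w_natCast k
    rw [Finset.sum_congr rfl h2]
    exact (Complex.isPrimitiveRoot_exp p pp).geom_sum_eq_zero (Fact.out : p.Prime).one_lt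

section Mats
variable {d : ℕ}

lemma pw_add {X : Matrix (Fin d) (Fin d) ℂ} (hX : X ^ p = 1) (s t : ZMod p) :
    X ^ (s + t).val = X ^ s.val * X ^ t.val := by
  rw [ZMod.val_add, ← pow_mod_eq hX, pow_add]

lemma pow_cast_eq {X : Matrix (Fin d) (Fin d) ℂ} (hX : X ^ p = 1) (n : ℕ) :
    X ^ n = X ^ ((n : ZMod p)).val := by
  rw [ZMod.val_natCast, ← pow_mod_eq hX]

lemma star_pw {X : Matrix (Fin d) (Fin d) ℂ} (hXu : X ∈ Matrix.unitaryGroup (Fin d) ℂ)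
    (hX : X ^ p = 1) (t : ZMod p) : star (X ^ t.val) = X ^ (-t).val := by
  have h1 : X ^ t.val * X ^ (-t).val = 1 := by rw [← pw_add hX]; simp
  have h2 : star (X ^ t.val) * X ^ t.val = 1 :=
    (Unitary.mem_iff.mp (pow_mem hXu t.val)).1
  calc star (X ^ t.val) = star (X ^ t.val) * (X ^ t.val * X ^ (-t).val) := by
        rw [h1, mul_one]
    _ = X ^ (-t).val := by rw [← mul_assoc, h2, one_mul]

omit [Fact p.Prime] in
lemma comm_pow_right {X Y : Matrix (Fin d) (Fin d) ℂ} {c : ℂ}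
    (h : X * Y = c • (Y * X)) (n : ℕ) :
    X * Y ^ n = c ^ n • (Y ^ n * X) := by
  induction n with
  | zero => simp
  | succ n ih =>
    rw [pow_succ, ← mul_assoc, ih, smul_mul_assoc, mul_assoc, h, mul_smul_comm, smul_smul,
        ← pow_succ]
    rw [mul_assoc]

omit [Fact p.Prime] in
lemma comm_pow {X Y : Matrix (Fin d) (Fin d) ℂ} {c : ℂ}
    (h : X * Y = c • (Y * X)) (m n : ℕ) :
    X ^ m * Y ^ n = c ^ (m * n) • (Y ^ n * X ^ m) := by
  induction m with
  | zero => simp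
  | succ m ih =>
    rw [pow_succ, mul_assoc, comm_pow_right h n, mul_smul_comm, ← mul_assoc, ih,
        smul_mul_assoc, smul_smul, ← pow_add, mul_assoc, ← pow_succ]
    congr 2
    ring

lemma comm_w {X Y : Matrix (Fin d) (Fin d) ℂ} {γ : ZMod p}
    (h : X * Y = w p γ • (Y * X)) (s t : ZMod p) :
    X ^ s.val * Y ^ t.val = w p (γ * s * t) • (Y ^ t.val * X ^ s.val) := by
  rw [comm_pow h s.val t.val, w_pow]
  congr 2
  push_cast [val_cast]
  ring

lemma comm_w_one {X R : Matrix (Fin d) (Fin d) ℂ} {γ : ZMod p}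
    (h : X * R = w p γ • (R * X)) (s : ZMod p) :
    X ^ s.val * R = w p (γ * s) • (R * X ^ s.val) := by
  have h1 := comm_pow h s.val 1
  simpa [w_pow, val_cast] using h1

omit [Fact p.Prime] in
lemma cons {X Y : Matrix (Fin d) (Fin d) ℂ} {c : ℂ}
    (h : X * Y = c • (Y * X)) (Z : Matrix (Fin d) (Fin d) ℂ) :
    X * (Y * Z) = c • (Y * (X * Z)) := by
  rw [← mul_assoc, h, smul_mul_assoc, mul_assoc]

end Mats
end Stmt7Aux

open Stmt7Aux in
/-- `V R V† = ω^{φ⁻¹(α−β)(a−σ) − β} · R · A^{−φ⁻¹(α−β)} · M^{φ⁻¹(α−β)}`,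
so `V` maps Pauli operators to Pauli operators up to a `p`-th root of unity phase. -/
theorem stmt7 (p d : ℕ) [Fact p.Prime] (hodd : Odd p)
    (M A R : Matrix (Fin d) (Fin d) ℂ)
    (hM : M ∈ Matrix.unitaryGroup (Fin d) ℂ)
    (hA : A ∈ Matrix.unitaryGroup (Fin d) ℂ)
    (hR : R ∈ Matrix.unitaryGroup (Fin d) ℂ)
    (hMp : M ^ p = 1) (hAp : A ^ p = 1) (hRp : R ^ p = 1)
    (φ α β : ZMod p) (hφ : φ ≠ 0)
    (hMA : M * A = omega p ^ φ.val • (A * M))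
    (hMR : M * R = omega p ^ α.val • (R * M))
    (hAR : A * R = omega p ^ β.val • (R * A))
    (σ a : ZMod p) :
    Vop p d M A σ a * R * star (Vop p d M A σ a) =
      omega p ^ ((φ⁻¹ * (α - β) * (a - σ) - β : ZMod p)).val •
        (R * (star A) ^ ((φ⁻¹ * (α - β) : ZMod p)).val *
          M ^ ((φ⁻¹ * (α - β) : ZMod p)).val) := by
  classical
  set m : ZMod p := φ⁻¹ * (α - β) with hm
  have hMA' : M * A = w p φ • (A * M) := hMA
  have hMR' : M * R = w p α • (R * M) := hMR
  have hAR' : A * R = w p β • (R * A) := hAR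
  have hAR1 : ∀ t : ZMod p, A ^ t.val * R = w p (β * t) • (R * A ^ t.val) :=
    fun t => comm_w_one hAR' t
  have hMR1 : ∀ s : ZMod p, M ^ s.val * R = w p (α * s) • (R * M ^ s.val) :=
    fun s => comm_w_one hMR' s
  have hMA1 : ∀ s t : ZMod p,
      M ^ s.val * A ^ t.val = w p (φ * s * t) • (A ^ t.val * M ^ s.val) :=
    fun s t => comm_w hMA' s t
  have hAAc : ∀ (s t : ZMod p) (Z : Matrix (Fin d) (Fin d) ℂ),
      A ^ s.val * (A ^ t.val * Z) = A ^ (s + t).val * Z := by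
    intro s t Z
    rw [← mul_assoc, ← pw_add hAp]
  have hMM : ∀ s t : ZMod p, M ^ s.val * M ^ t.val = M ^ (s + t).val :=
    fun s t => (pw_add hMp s t).symm
  -- key product computation
  have key : ∀ x y : ZMod p,
      M ^ x.val * (A ^ (-(x+1)).val * (R * (A ^ (y+1).val * M ^ (-y).val)))
        = w p (β * (-(x+1)) + α * x + φ * x * (y - x)) •
            (R * (A ^ (y - x).val * M ^ (x - y).val)) := by
    intro x y
    rw [cons (hAR1 (-(x+1))), hAAc (-(x+1)) (y+1), mul_smul_comm,
        cons (hMR1 x), cons (hMA1 x (-(x+1) + (y+1))), hMM x (-y)]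
    rw [show (-(x+1) + (y+1) : ZMod p) = y - x by ring,
        show (x + -y : ZMod p) = x - y by ring]
    simp only [mul_smul_comm, smul_smul, ← w_add]
    congr 2
    ring
  -- rewrite Vop as a ZMod-indexed sum
  have hV : Vop p d M A σ a
      = (w p a * ((Real.sqrt p : ℝ) : ℂ)⁻¹) •
          ∑ x : ZMod p, w p (-x * (σ - a)) • (M ^ x.val * A ^ (-(x+1)).val) := by
    rw [Vop, div_eq_mul_inv]
    congr 1
    rw [← sum_range_zmod (fun x : ZMod p =>
      w p (-x * (σ - a)) • (M ^ x.val * A ^ (-(x+1)).val))]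
    refine Finset.sum_congr rfl fun k hk => ?_
    congr 1
    rw [pow_cast_eq hMp k]
    congr 1
    rw [← star_pow, pow_cast_eq hAp (k+1), star_pw hA hAp]
    congr 2
    push_cast
    ring
  have hVs : star (Vop p d M A σ a)
      = (w p (-a) * ((Real.sqrt p : ℝ) : ℂ)⁻¹) •
          ∑ y : ZMod p, w p (y * (σ - a)) • (A ^ (y+1).val * M ^ (-y).val) := by
    rw [hV, star_smul, star_sum]
    congr 1
    · simp [Complex.star_def, _root_.map_mul, w_conj, Complex.conj_ofReal]
    · refine Finset.sum_congr rfl fun x _ => ?_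
      rw [star_smul, StarMul.star_mul, star_pw hA hAp, star_pw hM hMp]
      have h1 : star (w p (-x * (σ - a))) = w p (x * (σ - a)) := by
        rw [Complex.star_def, w_conj]; congr 1; ring
      rw [h1]
      congr 3
      ring
  -- scalar prefactor
  have hcc : (w p a * ((Real.sqrt p : ℝ) : ℂ)⁻¹) * (w p (-a) * ((Real.sqrt p : ℝ) : ℂ)⁻¹)
      = ((p : ℂ))⁻¹ := by
    have h1 : w p a * w p (-a) = 1 := w_mul_neg a
    have h2 : (((Real.sqrt p : ℝ) : ℂ))⁻¹ * (((Real.sqrt p : ℝ) : ℂ))⁻¹ = ((p : ℂ))⁻¹ := by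
      rw [← mul_inv]
      congr 1
      rw [← Complex.ofReal_mul, Real.mul_self_sqrt (by positivity)]
      norm_num
    calc (w p a * ((Real.sqrt p : ℝ) : ℂ)⁻¹) * (w p (-a) * ((Real.sqrt p : ℝ) : ℂ)⁻¹)
        = (w p a * w p (-a)) * ((((Real.sqrt p : ℝ) : ℂ))⁻¹ * (((Real.sqrt p : ℝ) : ℂ))⁻¹) := by
          ring
      _ = ((p : ℂ))⁻¹ := by rw [h1, h2, one_mul]
  -- per-term value of the double sum
  have term : ∀ x y : ZMod p,
      (w p (-x * (σ - a)) • (M ^ x.val * A ^ (-(x+1)).val)) * R *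
        (w p (y * (σ - a)) • (A ^ (y+1).val * M ^ (-y).val))
      = w p ((x - y) * (a - σ) + (β * (-(x+1)) + α * x + φ * x * (y - x))) •
          (R * (A ^ (y - x).val * M ^ (x - y).val)) := by
    intro x y
    rw [smul_mul_assoc, smul_mul_assoc, mul_smul_comm, smul_smul,
        mul_assoc (M ^ x.val * A ^ (-(x+1)).val), mul_assoc (M ^ x.val),
        key x y, smul_smul]
    congr 1
    rw [← w_add, ← w_add]
    congr 1
    ring
  rw [hVs, hV, smul_mul_assoc, smul_mul_assoc, mul_smul_comm, smul_smul, hcc,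
      Finset.sum_mul, Finset.sum_mul]
  have hsum1 : ∀ x : ZMod p,
      ((w p (-x * (σ - a)) • (M ^ x.val * A ^ (-(x+1)).val)) * R) *
        (∑ y : ZMod p, w p (y * (σ - a)) • (A ^ (y+1).val * M ^ (-y).val))
      = ∑ l : ZMod p, w p (l * (a - σ) - β + x * (α - β - φ * l)) •
          (R * (A ^ (-l).val * M ^ l.val)) := by
    intro x
    rw [Finset.mul_sum]
    rw [Finset.sum_congr rfl fun y _ => term x y]
    rw [← Equiv.sum_comp (Equiv.subLeft x) (fun y : ZMod p =>
      w p ((x - y) * (a - σ) + (β * (-(x+1)) + α * x + φ * x * (y - x))) •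
        (R * (A ^ (y - x).val * M ^ (x - y).val)))]
    refine Finset.sum_congr rfl fun l _ => ?_
    simp only [Equiv.subLeft_apply]
    rw [show x - l - x = -l by ring, show x - (x - l) = l by ring]
    congr 2
    ring
  rw [Finset.sum_congr rfl fun x _ => hsum1 x, Finset.sum_comm]
  have hsum2 : ∀ l : ZMod p,
      (∑ x : ZMod p, w p (l * (a - σ) - β + x * (α - β - φ * l)) •
          (R * (A ^ (-l).val * M ^ l.val)))
      = ((if α - β - φ * l = 0 then (p : ℂ) else 0) * w p (l * (a - σ) - β)) •
          (R * (A ^ (-l).val * M ^ l.val)) := by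
    intro l
    rw [← Finset.sum_smul]
    congr 1
    have h1 : ∀ x : ZMod p, w p (l * (a - σ) - β + x * (α - β - φ * l))
        = w p (x * (α - β - φ * l)) * w p (l * (a - σ) - β) := by
      intro x; rw [← w_add]; congr 1; ring
    rw [Finset.sum_congr rfl fun x _ => h1 x, ← Finset.sum_mul, sum_w]
  rw [Finset.sum_congr rfl fun l _ => hsum2 l]
  have hpne : (p : ℂ) ≠ 0 := Nat.cast_ne_zero.2 pp
  rw [Finset.sum_eq_single_of_mem m (Finset.mem_univ m) ?_]
  · have hc : α - β - φ * m = 0 := by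
      rw [hm, ← mul_assoc, mul_inv_cancel₀ hφ, one_mul]; ring
    rw [if_pos hc, smul_smul, ← mul_assoc, inv_mul_cancel₀ hpne, one_mul]
    rw [show (star A) ^ m.val = A ^ (-m).val by
          rw [← star_pow]; exact star_pw hA hAp m]
    simp only [w, mul_assoc]
  · intro l _ hl
    have hc : α - β - φ * l ≠ 0 := by
      intro hc
      apply hl
      have h2 : φ * l = α - β := by linear_combination -hc
      rw [hm]
      field_simp
      linear_combination h2
    rw [if_neg hc, zero_mul, zero_smul]
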